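/- Let B ⊆ (ℕ → ℝ^d) be a shift-invariant behavior (σB = B) with lag at most ℓ. Let L > ℓ, let ŵ₁, ŵ₂ ∈ B|_L, and let l be an integer with ℓ ≤ l ≤ L such that the last l entries of ŵ₁ coincide with the first l entries of ŵ₂ (i.e. ŵ₁(L−l+j) = ŵ₂(j) for j = 0,…,l−1, 0-indexed). Then the concatenation of ŵ₁ with the last L−l entries of ŵ₂ is an element of B|_{2L−l}. -/
import Mathlib


/-- The `L`-step restriction of a behavior `B ⊆ (ℕ → ℝ^d)`: the set of (ℕ-indexed
encodings of) length-`L` initial segments, i.e. functions agreeing with some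
trajectory of `B` on the first `L` steps. -/
def restrict {α : Type*} (L : ℕ) (B : Set (ℕ → α)) : Set (ℕ → α) :=
  {v | ∃ w ∈ B, ∀ k < L, v k = w k}

/-- The shift operator `(σw)(k) = w(k+1)`. -/
def shift {α : Type*} (w : ℕ → α) : ℕ → α := fun k => w (k + 1)

/-- `B` has lag at most `ℓ`: every trajectory all of whose windows of length `ℓ+1`
are windows of `B` belongs to `B`. -/
def hasLagAtMost {α : Type*} (B : Set (ℕ → α)) (ℓ : ℕ) : Prop :=
  ∀ w : ℕ → α, (∀ k : ℕ, (fun j => w (k + j)) ∈ restrict (ℓ + 1) B) → w ∈ B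

lemma shift_iter_apply {α : Type*} (w : ℕ → α) (m k : ℕ) :
    (shift^[m] w) k = w (k + m) := by
  induction m generalizing w with
  | zero => rfl
  | succ n ih =>
    rw [Function.iterate_succ_apply, ih]
    simp [shift, Nat.add_assoc, Nat.add_comm 1 n]

lemma shift_iter_mem {α : Type*} {B : Set (ℕ → α)} (hshift : shift '' B = B)
    {w : ℕ → α} (hw : w ∈ B) (m : ℕ) : shift^[m] w ∈ B := by
  induction m with
  | zero => exact hw
  | succ n ih =>
    rw [Function.iterate_succ_apply']
    rw [← hshift]
    exact ⟨_, ih, rfl⟩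

/-- weaving lemma: if `B` is shift-invariant with lag at most `ℓ`,
`L > ℓ`, `ŵ₁, ŵ₂ ∈ B|_L`, `ℓ ≤ l ≤ L`, and the last `l` entries of `ŵ₁` coincide
with the first `l` entries of `ŵ₂`, then the concatenation of `ŵ₁` with the last
`L − l` entries of `ŵ₂` belongs to `B|_{2L−l}`. -/
theorem weaving {d : ℕ} (B : Set (ℕ → Fin d → ℝ)) (ℓ : ℕ)
    (hshift : shift '' B = B) (hlag : hasLagAtMost B ℓ)
    (L l : ℕ) (hL : ℓ < L) (hl1 : ℓ ≤ l) (hl2 : l ≤ L)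
    (w₁ w₂ : ℕ → Fin d → ℝ)
    (hw₁ : w₁ ∈ restrict L B) (hw₂ : w₂ ∈ restrict L B)
    (hmatch : ∀ j < l, w₁ (L - l + j) = w₂ j) :
    (fun k => if k < L then w₁ k else w₂ (k - (L - l))) ∈ restrict (2 * L - l) B := by
  obtain ⟨v₁, hv₁, hv₁eq⟩ := hw₁
  obtain ⟨v₂, hv₂, hv₂eq⟩ := hw₂
  set w : ℕ → Fin d → ℝ := fun k => if k < L then v₁ k else v₂ (k - (L - l)) with hw
  have hwB : w ∈ B := by
    apply hlag
    intro k
    by_cases hk : k + ℓ < L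
    · refine ⟨shift^[k] v₁, shift_iter_mem hshift hv₁ k, ?_⟩
      intro j hj
      have : k + j < L := by omega
      simp only [hw, if_pos this, shift_iter_apply]
      rw [Nat.add_comm j k]
    · refine ⟨shift^[k - (L - l)] v₂, shift_iter_mem hshift hv₂ _, ?_⟩
      intro j hj
      have hk' : L - l ≤ k := by omega
      rw [shift_iter_apply]
      have harg : j + (k - (L - l)) = k + j - (L - l) := by omega
      rw [harg]
      by_cases h : k + j < L
      · simp only [hw, if_pos h]
        have hm : k + j - (L - l) < l := by omega
        rw [← hv₁eq _ h, ← hv₂eq _ (by omega : k + j - (L - l) < L)]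
        have heq : L - l + (k + j - (L - l)) = k + j := by omega
        have h2 := hmatch _ hm
        rw [heq] at h2
        exact h2
      · simp only [hw, if_neg h]
  refine ⟨w, hwB, ?_⟩
  intro k hk
  by_cases h : k < L
  · simp only [hw, if_pos h]
    exact hv₁eq _ h
  · simp only [hw, if_neg h]
    exact hv₂eq _ (by omega)
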